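/- arXiv:1307.0635 — 8 statements merged into one kernel-verified Lean document; each statement's English description precedes it below -/
import Mathlib

section
/- The class E of extended energy functions, ordered pointwise, is a complete lattice whose bottom element is the constant-⊥ function and whose top element is the function ⊤̄ with ⊤̄(⊥)=⊥ and ⊤̄(x)=∞ for all x≠⊥; moreover, suprema in E are computed pointwise, i.e. for any index set I, any family (f_i)_{i∈I} in E, and any x ∈ [0,∞]_⊥, (sup_{i∈I} f_i)(x) = sup_{i∈I} f_i(x). -/
open scoped ENNReal NNReal

/-- `[0,∞]_⊥`: the nonnegative extended reals `[0,∞]` with a bottom element `⊥` adjoined. -/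
abbrev EnergyVal : Type := WithBot ℝ≥0∞

noncomputable instance : CompleteLattice EnergyVal :=
  inferInstanceAs (CompleteLattice (WithBot (WithTop ℝ≥0)))

/-- An extended energy function: `f ⊥ = ⊥`, `f x₂ ≥ f x₁ + x₂ - x₁` for `x₁ ≤ x₂`
(with `⊥ + c = ⊥`), and `f ∞ = ∞` unless `f` is constantly `⊥`. -/
def IsEnergyFunction (f : EnergyVal → EnergyVal) : Prop :=
  f ⊥ = ⊥ ∧
  (∀ x₁ x₂ : ℝ≥0∞, x₁ ≤ x₂ → f ↑x₁ + ↑(x₂ - x₁) ≤ f ↑x₂) ∧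
  ((∀ x, f x = ⊥) ∨ f ↑(⊤ : ℝ≥0∞) = ↑(⊤ : ℝ≥0∞))

/-- The constant-`⊥` function `⊥̄`. -/
def bbotFn : EnergyVal → EnergyVal := fun _ => ⊥

open Classical in
/-- The function `⊤̄` with `⊤̄ ⊥ = ⊥` and `⊤̄ x = ∞` for `x ≠ ⊥`. -/
noncomputable def ttopFn : EnergyVal → EnergyVal :=
  fun x => if x = ⊥ then ⊥ else ↑(⊤ : ℝ≥0∞)

open Classical in
/-- The star of an energy function: `f* ⊥ = ⊥`, `f* x = x` if `f x ≤ x`,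
and `f* x = ∞` if `f x > x`. -/
noncomputable def starFn (f : EnergyVal → EnergyVal) : EnergyVal → EnergyVal :=
  fun x => if x = ⊥ then ⊥ else if f x ≤ x then x else ↑(⊤ : ℝ≥0∞)

/-- The omega of an energy function, an element of the semimodule `V`
(Booleans identified with `Prop`): `f^ω x = true` iff `x ≠ ⊥` and `f x ≥ x`. -/
def omegaFn (f : EnergyVal → EnergyVal) : EnergyVal → Prop :=
  fun x => x ≠ ⊥ ∧ x ≤ f x

/-- Membership in the semimodule `V`: monotone maps `[0,∞]_⊥ → B` with `u ⊥ = false`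
(Booleans identified with `Prop`, ordered `false < true`). -/
def IsV (u : EnergyVal → Prop) : Prop := ¬ u ⊥ ∧ Monotone u

lemma aux_iSup_add_le {ι : Type} (a : ι → EnergyVal) (c : ℝ≥0∞) (b : EnergyVal)
    (h : ∀ i, a i + ↑c ≤ b) : (⨆ i, a i) + ↑c ≤ b := by
  by_cases hall : ∀ i, a i = ⊥
  · rw [iSup_eq_bot.mpr hall, WithBot.bot_add]; exact bot_le
  · push_neg at hall
    obtain ⟨j, hj⟩ := hall
    haveI : Nonempty ι := ⟨j⟩
    set g : ι → ℝ≥0∞ := fun i => WithBot.unbotD 0 (a i) with hg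
    have hcoe : ∀ i, a i ≠ ⊥ → a i = ↑(g i) := by
      intro i hi
      obtain ⟨u, hu⟩ := WithBot.ne_bot_iff_exists.mp hi
      simp [hg, ← hu]
    have h1 : (⨆ i, a i) = ↑(⨆ i, g i) := by
      apply le_antisymm
      · apply iSup_le
        intro i
        by_cases hi : a i = ⊥
        · rw [hi]; exact bot_le
        · rw [hcoe i hi]
          exact WithBot.coe_le_coe.mpr (le_iSup g i)
      · rw [WithBot.coe_iSup (OrderTop.bddAbove _)]
        apply iSup_le
        intro i
        by_cases hi : a i = ⊥
        · have hgi : g i = 0 := by simp [hg, hi]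
          rw [hgi]
          calc ((0:ℝ≥0∞) : EnergyVal) ≤ ↑(g j) := WithBot.coe_le_coe.mpr zero_le
            _ = a j := (hcoe j hj).symm
            _ ≤ ⨆ i, a i := le_iSup a j
        · rw [← hcoe i hi]; exact le_iSup a i
    rw [h1, ← WithBot.coe_add, ENNReal.iSup_add g, WithBot.coe_iSup (OrderTop.bddAbove _)]
    apply iSup_le
    intro i
    by_cases hi : a i = ⊥
    · have hgi : g i = 0 := by simp [hg, hi]
      rw [hgi, zero_add]
      calc ((c:ℝ≥0∞) : EnergyVal) ≤ ↑(g j + c) := WithBot.coe_le_coe.mpr le_add_self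
        _ = a j + ↑c := by rw [hcoe j hj, WithBot.coe_add]
        _ ≤ b := h j
    · calc ((g i + c : ℝ≥0∞) : EnergyVal) = a i + ↑c := by rw [WithBot.coe_add, ← hcoe i hi]
        _ ≤ b := h i

/-- The class `E` of extended energy functions, ordered pointwise, is a complete lattice:
`⊥̄` and `⊤̄` are energy functions and are the least resp. greatest elements of `E`, and
`E` is closed under arbitrary pointwise suprema, which are least upper bounds
(i.e. suprema in `E` are computed pointwise). -/
theorem stmt0 :
    IsEnergyFunction bbotFn ∧
    IsEnergyFunction ttopFn ∧
    (∀ f : EnergyVal → EnergyVal, IsEnergyFunction f →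
      (∀ x, bbotFn x ≤ f x) ∧ (∀ x, f x ≤ ttopFn x)) ∧
    (∀ (ι : Type) (F : ι → EnergyVal → EnergyVal), (∀ i, IsEnergyFunction (F i)) →
      IsEnergyFunction (fun x => ⨆ i, F i x) ∧
      IsLUB {g | ∃ i, g = F i} (fun x => ⨆ i, F i x)) := by
  refine ⟨⟨rfl, ?_, Or.inl fun _ => rfl⟩, ⟨?_, ?_, Or.inr ?_⟩, ?_, ?_⟩
  · intro x₁ x₂ _
    simp [bbotFn, WithBot.bot_add]
  · simp [ttopFn]
  · intro x₁ x₂ _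
    simp only [ttopFn, WithBot.coe_ne_bot, if_false, ← WithBot.coe_add, top_add, le_refl]
  · simp [ttopFn]
  · intro f hf
    refine ⟨fun x => bot_le, fun x => ?_⟩
    unfold ttopFn
    split_ifs with h
    · rw [h, hf.1]
    · exact le_top
  · intro ι F hF
    constructor
    · refine ⟨iSup_eq_bot.mpr fun i => (hF i).1, ?_, ?_⟩
      · intro x₁ x₂ h12
        exact aux_iSup_add_le (fun i => F i ↑x₁) (x₂ - x₁) _
          (fun i => le_trans ((hF i).2.1 x₁ x₂ h12) (le_iSup (fun i => F i ↑x₂) i))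
      · by_cases hb : ∀ i x, F i x = ⊥
        · exact Or.inl fun x => iSup_eq_bot.mpr fun i => hb i x
        · push_neg at hb
          obtain ⟨i, x, hix⟩ := hb
          have htop : F i ↑(⊤ : ℝ≥0∞) = ↑(⊤ : ℝ≥0∞) := by
            rcases (hF i).2.2 with h | h
            · exact absurd (h x) hix
            · exact h
          exact Or.inr (le_antisymm le_top
            (le_trans htop.ge (le_iSup (fun i => F i ↑(⊤ : ℝ≥0∞)) i)))
    · constructor
      · rintro g ⟨i, rfl⟩ x
        exact le_iSup (fun i => F i x) i
      · intro g hg x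
        exact iSup_le fun i => hg ⟨i, rfl⟩ x
end

section
/- For any g ∈ E, there exists f ∈ E such that g = f* if, and only if, there exists k ∈ [0,∞]_⊥ such that g(x) = x for all x < k, g(x) = ∞ for all x > k, and either g(k) = k or g(k) = ∞. -/
open scoped ENNReal NNReal

lemma starFn_bot (f : EnergyVal → EnergyVal) : starFn f ⊥ = ⊥ := by
  simp [starFn]

lemma starFn_coe_pos (f : EnergyVal → EnergyVal) (a : ℝ≥0∞) (h : f ↑a ≤ ↑a) :
    starFn f ↑a = ↑a := by
  simp only [starFn]
  rw [if_neg WithBot.coe_ne_bot, if_pos h]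

lemma starFn_coe_neg (f : EnergyVal → EnergyVal) (a : ℝ≥0∞) (h : ¬ f ↑a ≤ ↑a) :
    starFn f ↑a = ↑(⊤ : ℝ≥0∞) := by
  simp only [starFn]
  rw [if_neg WithBot.coe_ne_bot, if_neg h]

lemma starFn_top (f : EnergyVal → EnergyVal) : starFn f ↑(⊤ : ℝ≥0∞) = ↑(⊤ : ℝ≥0∞) := by
  by_cases h : f ↑(⊤ : ℝ≥0∞) ≤ ↑(⊤ : ℝ≥0∞)
  · exact starFn_coe_pos f ⊤ h
  · exact starFn_coe_neg f ⊤ h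

lemma energy_up {f : EnergyVal → EnergyVal} (hf : IsEnergyFunction f)
    {x₁ x₂ : ℝ≥0∞} (h12 : x₁ ≤ x₂) (h2 : x₂ ≠ ⊤) (h1 : ¬ f ↑x₁ ≤ ↑x₁) :
    ¬ f ↑x₂ ≤ ↑x₂ := by
  intro h2'
  have key := hf.2.1 x₁ x₂ h12
  have h1' : (↑x₁ : EnergyVal) < f ↑x₁ := lt_of_not_ge h1
  obtain ⟨a, ha⟩ : ∃ a : ℝ≥0∞, f ↑x₁ = ↑a := by
    cases hx : f ↑x₁ with
    | none => rw [hx] at h1'; exact absurd h1' not_lt_bot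
    | some a => exact ⟨a, rfl⟩
  obtain ⟨b, hb⟩ : ∃ b : ℝ≥0∞, f ↑x₂ = ↑b := by
    cases hx : f ↑x₂ with
    | none => rw [hx, ha, ← WithBot.coe_add] at key; exact absurd key (WithBot.not_coe_le_bot _)
    | some b => exact ⟨b, rfl⟩
  rw [ha] at h1'
  rw [ha, hb, ← WithBot.coe_add, WithBot.coe_le_coe] at key
  rw [hb, WithBot.coe_le_coe] at h2'
  have hx1a : x₁ < a := WithBot.coe_lt_coe.mp h1'
  have : x₂ < a + (x₂ - x₁) := by
    calc x₂ = x₁ + (x₂ - x₁) := (add_tsub_cancel_of_le h12).symm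
    _ < a + (x₂ - x₁) := ENNReal.add_lt_add_right (ENNReal.sub_ne_top h2) hx1a
  exact absurd (le_trans key h2') (not_le.mpr this)

/-- An extended energy function `g` is of the form `f*` for some extended energy
function `f` if, and only if, there is `k ∈ [0,∞]_⊥` such that `g x = x` for all
`x < k`, `g x = ∞` for all `x > k`, and `g k = k` or `g k = ∞`. -/
theorem stmt4 (g : EnergyVal → EnergyVal) (hg : IsEnergyFunction g) :
    (∃ f : EnergyVal → EnergyVal, IsEnergyFunction f ∧ g = starFn f) ↔
    (∃ k : EnergyVal, (∀ x, x < k → g x = x) ∧ (∀ x, k < x → g x = ↑(⊤ : ℝ≥0∞)) ∧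
      (g k = k ∨ g k = ↑(⊤ : ℝ≥0∞))) := by
  constructor
  · rintro ⟨f, hf, rfl⟩
    set U : Set EnergyVal := {x | starFn f x = ↑(⊤ : ℝ≥0∞)} with hU
    refine ⟨sInf U, ?_, ?_, ?_⟩
    · intro x hx
      have hxU : x ∉ U := fun h => absurd (sInf_le h) (not_le.mpr hx)
      cases x with
      | none => exact starFn_bot f
      | some a =>
        by_cases hfa : f ↑a ≤ ↑a
        · exact starFn_coe_pos f a hfa
        · exact absurd (starFn_coe_neg f a hfa) hxU
    · intro x hx
      obtain ⟨u, huU, hux⟩ : ∃ u ∈ U, u < x := by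
        by_contra h
        push_neg at h
        exact absurd (le_sInf h) (not_le.mpr hx)
      obtain ⟨a, rfl⟩ : ∃ a : ℝ≥0∞, u = ↑a := by
        cases u with
        | none =>
          exfalso
          have : starFn f ⊥ = ↑(⊤ : ℝ≥0∞) := huU
          rw [starFn_bot] at this
          exact WithBot.coe_ne_bot this.symm
        | some a => exact ⟨a, rfl⟩
      obtain ⟨b, rfl⟩ : ∃ b : ℝ≥0∞, x = ↑b := by
        cases x with
        | none => exact absurd hux not_lt_bot
        | some b => exact ⟨b, rfl⟩
      have hab : a < b := WithBot.coe_lt_coe.mp hux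
      by_cases hb : b = ⊤
      · subst hb; exact starFn_top f
      · have hfa : ¬ f ↑a ≤ ↑a := by
          intro hle
          have h1 : starFn f ↑a = ↑a := starFn_coe_pos f a hle
          have h2 : starFn f ↑a = ↑(⊤ : ℝ≥0∞) := huU
          have : a = ⊤ := WithBot.coe_inj.mp (h1.symm.trans h2)
          exact hb (top_le_iff.mp (this ▸ hab.le))
        exact starFn_coe_neg f b (energy_up hf hab.le hb hfa)
    · by_cases hk : sInf U ∈ U
      · exact Or.inr hk
      · left
        cases hks : sInf U with
        | none => exact starFn_bot f
        | some a =>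
          rw [hks] at hk
          by_cases hfa : f ↑a ≤ ↑a
          · exact starFn_coe_pos f a hfa
          · exact absurd (starFn_coe_neg f a hfa) hk
  · rintro ⟨k, h1, h2, h3⟩
    refine ⟨g, hg, funext fun x => ?_⟩
    have main : ∀ a : ℝ≥0∞, g ↑a = ↑(⊤ : ℝ≥0∞) → g ↑a = starFn g ↑a := by
      intro a hx
      by_cases ha : a = ⊤
      · subst ha; rw [hx, starFn_top]
      · have hna : ¬ g ↑a ≤ ↑a := by
          rw [hx]
          intro hle
          exact ha (top_le_iff.mp (WithBot.coe_le_coe.mp hle))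
        rw [hx, starFn_coe_neg g a hna]
    rcases lt_trichotomy x k with h | h | h
    · have hx := h1 x h
      cases x with
      | none => show g ⊥ = starFn g ⊥; rw [starFn_bot]; exact hg.1
      | some a => show g ↑a = starFn g ↑a; rw [starFn_coe_pos g a hx.le]; exact hx
    · subst h
      rcases h3 with hx | hx
      · cases x with
        | none => show g ⊥ = starFn g ⊥; rw [starFn_bot]; exact hg.1
        | some a => show g ↑a = starFn g ↑a; rw [starFn_coe_pos g a hx.le]; exact hx
      · cases x with
        | none =>
          exfalso
          have : (⊥ : EnergyVal) = ↑(⊤ : ℝ≥0∞) := hg.1 ▸ hx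
          exact WithBot.coe_ne_bot this.symm
        | some a => exact main a hx
    · have hx := h2 x h
      cases x with
      | none => exact absurd h not_lt_bot
      | some a => exact main a hx
end

section
/- For every extended energy function f ∈ E, f* = sup_{n∈ℕ} fⁿ, i.e. for every x ∈ [0,∞]_⊥, f*(x) = sup_{n∈ℕ} fⁿ(x). -/
open scoped ENNReal NNReal

/-- For every extended energy function `f`, `f* = sup_{n∈ℕ} fⁿ`, i.e. for every
`x ∈ [0,∞]_⊥`, `f* x = ⨆ n, fⁿ x`. -/
theorem stmt8 (f : EnergyVal → EnergyVal) (hf : IsEnergyFunction f) :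
    starFn f = fun x => ⨆ n : ℕ, f^[n] x := by
  obtain ⟨hbot, hen, htop⟩ := hf
  have hmono : Monotone f := by
    intro x y hxy
    induction x using WithBot.recBotCoe with
    | bot => rw [hbot]; exact bot_le
    | coe a =>
      induction y using WithBot.recBotCoe with
      | bot => exact absurd hxy (by simp)
      | coe c =>
        have hac : a ≤ c := by exact_mod_cast hxy
        calc f ↑a ≤ f ↑a + ↑(c - a) := le_add_of_nonneg_right (by simp)
          _ ≤ f ↑c := hen a c hac
  funext x
  induction x using WithBot.recBotCoe with
  | bot =>
    have hiter : ∀ n : ℕ, f^[n] (⊥ : EnergyVal) = ⊥ := by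
      intro n
      induction n with
      | zero => rfl
      | succ n ih => rw [Function.iterate_succ_apply', ih, hbot]
    simp [starFn, hiter]
  | coe a =>
    by_cases hle : f ↑a ≤ ↑a
    · have hiter : ∀ n : ℕ, f^[n] (↑a : EnergyVal) ≤ ↑a := by
        intro n
        induction n with
        | zero => exact le_refl _
        | succ n ih =>
          rw [Function.iterate_succ_apply']
          exact le_trans (hmono ih) hle
      simp only [starFn, if_neg (by simp : (↑a : EnergyVal) ≠ ⊥), if_pos hle]
      exact le_antisymm (le_iSup (fun n => f^[n] (↑a : EnergyVal)) 0) (iSup_le hiter)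
    · simp only [starFn, if_neg (by simp : (↑a : EnergyVal) ≠ ⊥), if_neg hle]
      have haT : a ≠ ⊤ := by
        rintro rfl
        rcases htop with h | h
        · exact hle (by rw [h]; exact bot_le)
        · exact hle (le_of_eq h)
      have hfa : ↑a < f ↑a := lt_of_not_ge hle
      have hfne : f ↑a ≠ ⊥ := by
        intro hh
        rw [hh] at hfa
        exact absurd hfa (by simp)
      obtain ⟨b, hb'⟩ := WithBot.ne_bot_iff_exists.mp hfne
      have hb : f ↑a = ↑b := hb'.symm
      have hab : a < b := by rw [hb] at hfa; exact_mod_cast hfa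
      have key : ∀ n : ℕ, (↑(a + n * (b - a)) : EnergyVal) ≤ f^[n] ↑a := by
        intro n
        induction n with
        | zero => simp
        | succ n ih =>
          rw [Function.iterate_succ_apply']
          refine le_trans ?_ (hmono ih)
          have h2 := hen a (a + n * (b - a)) (le_add_right le_rfl)
          rw [hb, ENNReal.add_sub_cancel_left haT] at h2
          refine le_trans ?_ h2
          have heq : b + (n : ℝ≥0∞) * (b - a) = a + ((n : ℕ) + 1 : ℕ) * (b - a) := by
            push_cast
            calc b + (n : ℝ≥0∞) * (b - a) = (a + (b - a)) + (n : ℝ≥0∞) * (b - a) := by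
                  rw [add_tsub_cancel_of_le hab.le]
              _ = a + ((n : ℝ≥0∞) + 1) * (b - a) := by ring
          rw [← WithBot.coe_add, heq]
      have htopeq : ((⊤ : ℝ≥0∞) : EnergyVal) = ⊤ := rfl
      rw [htopeq]
      refine le_antisymm ?_ le_top
      rcases eq_or_ne b ⊤ with rfl | hbT
      · refine le_trans ?_ (le_iSup (fun n => f^[n] (↑a : EnergyVal)) 1)
        simp [hb]
      · by_contra h
        set s := ⨆ n : ℕ, f^[n] (↑a : EnergyVal) with hs
        have hsne : s ≠ ⊥ := by
          intro hsb
          have := le_trans (key 0) (le_iSup (fun n => f^[n] (↑a : EnergyVal)) 0)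
          rw [← hs, hsb] at this
          simp at this
        obtain ⟨c, hsc⟩ := WithBot.ne_bot_iff_exists.mp hsne
        · have hcT : c ≠ ⊤ := by
            rintro rfl
            exact h (by rw [← hsc]; exact le_refl _)
          obtain ⟨n, hn⟩ := ENNReal.exists_nat_mul_gt
            (a := b - a) (b := c) (by simp [tsub_eq_zero_iff_le, not_le, hab]) hcT
          have hle2 : (↑(a + n * (b - a)) : EnergyVal) ≤ ↑c := by
            rw [hsc]
            exact le_trans (key n) (le_iSup (fun n => f^[n] (↑a : EnergyVal)) n)
          have : a + n * (b - a) ≤ c := by exact_mod_cast hle2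
          exact absurd (lt_of_lt_of_le hn (le_add_self.trans this)) (lt_irrefl _)
end

section
/- For all extended energy functions f, g ∈ E, (g ∘ f)^ω = (f ∘ g)^ω ∘ f. -/
open scoped ENNReal NNReal

lemma energy_mono {f : EnergyVal → EnergyVal} (hf : IsEnergyFunction f) :
    Monotone f := by
  intro a b hab
  induction a using WithBot.recBotCoe with
  | bot => rw [hf.1]; exact bot_le
  | coe xa =>
    induction b using WithBot.recBotCoe with
    | bot => exact absurd hab (by simp)
    | coe xb =>
      have hxx : xa ≤ xb := by exact_mod_cast hab
      calc f ↑xa ≤ f ↑xa + ↑(xb - xa) := by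
            rcases hc : f (↑xa : EnergyVal) with _ | c
            · exact bot_le
            · show (↑c : EnergyVal) ≤ ↑c + ↑(xb - xa)
              rw [← WithBot.coe_add]
              exact WithBot.coe_le_coe.mpr le_self_add
        _ ≤ f ↑xb := hf.2.1 xa xb hxx

/-- For all extended energy functions `f, g`: `(g ∘ f)^ω = (f ∘ g)^ω ∘ f`. -/
theorem stmt11 (f g : EnergyVal → EnergyVal)
    (hf : IsEnergyFunction f) (hg : IsEnergyFunction g) :
    omegaFn (g ∘ f) = omegaFn (f ∘ g) ∘ f := by
  funext x
  simp only [omegaFn, Function.comp_apply, eq_iff_iff]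
  constructor
  · rintro ⟨hxb, hx⟩
    have hfxb : f x ≠ ⊥ := by
      intro h
      rw [h, hg.1] at hx
      exact hxb (le_bot_iff.mp hx)
    exact ⟨hfxb, energy_mono hf hx⟩
  · rintro ⟨hfxb, hfx⟩
    have hxb : x ≠ ⊥ := fun h => hfxb (h ▸ hf.1)
    refine ⟨hxb, ?_⟩
    by_contra hlt
    push_neg at hlt
    obtain ⟨xa, rfl⟩ := WithBot.ne_bot_iff_exists.mp hxb
    have hyb : g (f ↑xa) ≠ ⊥ := by
      intro h
      rw [h, hf.1] at hfx
      exact hfxb (le_bot_iff.mp hfx)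
    obtain ⟨ya, hy⟩ := WithBot.ne_bot_iff_exists.mp hyb
    rw [← hy] at hlt hfx
    have hylt : ya < xa := by exact_mod_cast hlt
    have hfyb : f ↑ya ≠ ⊥ := by
      intro h
      rw [h] at hfx
      exact hfxb (le_bot_iff.mp hfx)
    obtain ⟨b, hb⟩ := WithBot.ne_bot_iff_exists.mp hfyb
    have hen := hf.2.1 ya xa hylt.le
    rw [← hb, ← WithBot.coe_add] at hen
    by_cases hbt : b = ⊤
    · -- f ↑ya = ⊤, so f ↑xa = ⊤, so g ⊤ = ⊤ = ya, contradiction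
      have hfxtop : f ↑xa = ↑(⊤ : ℝ≥0∞) := by
        refine le_antisymm ?_ ?_
        · exact le_top.trans_eq (by rfl)
        · exact le_trans (by rw [hbt]; exact_mod_cast le_top.trans_eq (by simp)) hen
      have hgne : ¬ (∀ x, g x = ⊥) := fun h => hyb (h _)
      have hgtop := hg.2.2.resolve_left hgne
      rw [hfxtop] at hy
      rw [hgtop] at hy
      have : ya = ⊤ := by exact_mod_cast hy
      exact absurd (this ▸ hylt) (by simp)
    · rw [← hb] at hfx
      have h2 : (↑(b + (xa - ya)) : EnergyVal) ≤ ↑b := hen.trans hfx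
      have h3 : b + (xa - ya) ≤ b := by exact_mod_cast h2
      have : xa - ya = 0 := by
        by_contra hne
        exact absurd h3 (not_le.mpr (ENNReal.lt_add_right hbt hne))
      exact absurd (tsub_eq_zero_iff_le.mp this) (not_le.mpr hylt)
end

section
/- For all extended energy functions f, g ∈ E, (f ∨ g)^ω = (f^ω ∘ (g ∘ f*)*) ∨ (g ∘ f*)^ω. Together with (g∘f)^ω = (f∘g)^ω ∘ f, this makes (E, V) a Conway semiring-semimodule pair. -/
open scoped ENNReal NNReal

lemma starFn_coe_le {h : EnergyVal → EnergyVal} {a : ℝ≥0∞} (hle : h ↑a ≤ ↑a) :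
    starFn h ↑a = ↑a := by
  simp [starFn, hle]

lemma ef_mono {f : EnergyVal → EnergyVal} (hf : IsEnergyFunction f) {a b : ℝ≥0∞}
    (h : a ≤ b) : f ↑a ≤ f ↑b :=
  le_trans (le_add_of_nonneg_right (by exact_mod_cast (zero_le : (0 : ℝ≥0∞) ≤ b - a))) (hf.2.1 a b h)

/-- For all extended energy functions `f, g`:
`(f ∨ g)^ω = (f^ω ∘ (g ∘ f*)*) ∨ (g ∘ f*)^ω`; together with
`(g ∘ f)^ω = (f ∘ g)^ω ∘ f` this makes `(E, V)` a Conway semiring-semimodule pair. -/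
theorem stmt12 (f g : EnergyVal → EnergyVal)
    (hf : IsEnergyFunction f) (hg : IsEnergyFunction g) :
    (omegaFn (fun x => f x ⊔ g x) =
      fun x => (omegaFn f ∘ starFn (g ∘ starFn f)) x ∨ omegaFn (g ∘ starFn f) x) ∧
    omegaFn (g ∘ f) = omegaFn (f ∘ g) ∘ f := by
  constructor
  · funext x
    induction x using WithBot.recBotCoe with
    | bot => simp [omegaFn, starFn]
    | coe a =>
      have hane : (↑a : EnergyVal) ≠ ⊥ := WithBot.coe_ne_bot
      rw [eq_iff_iff]
      by_cases h1 : f ↑a ≤ ↑a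
      · have hs : starFn f ↑a = ↑a := starFn_coe_le h1
        by_cases h2 : g ↑a ≤ ↑a
        · have ht : starFn (g ∘ starFn f) ↑a = ↑a :=
            starFn_coe_le (by rw [Function.comp_apply, hs]; exact h2)
          simp only [omegaFn, Function.comp, ht, hs, le_sup_iff]
          tauto
        · have h2' : (↑a : EnergyVal) ≤ g ↑a := le_of_lt (not_le.1 h2)
          refine iff_of_true ⟨hane, le_sup_of_le_right h2'⟩
            (Or.inr ⟨hane, ?_⟩)
          show (↑a : EnergyVal) ≤ g (starFn f ↑a)
          rw [hs]; exact h2'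
      · have h1' : (↑a : EnergyVal) ≤ f ↑a := le_of_lt (not_le.1 h1)
        have hs : starFn f ↑a = ↑(⊤ : ℝ≥0∞) := by simp [starFn, hane, h1]
        refine iff_of_true ⟨hane, le_sup_of_le_left h1'⟩ ?_
        rcases hg.2.2 with hgbot | hgtop
        · left
          have ht : starFn (g ∘ starFn f) ↑a = ↑a :=
            starFn_coe_le (le_of_eq_of_le (hgbot _) bot_le)
          show omegaFn f (starFn (g ∘ starFn f) ↑a)
          rw [ht]; exact ⟨hane, h1'⟩
        · right
          refine ⟨hane, ?_⟩
          show (↑a : EnergyVal) ≤ g (starFn f ↑a)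
          rw [hs, hgtop]
          exact le_top
  · funext x
    induction x using WithBot.recBotCoe with
    | bot => simp [omegaFn, Function.comp, hf.1]
    | coe a =>
      have hane : (↑a : EnergyVal) ≠ ⊥ := WithBot.coe_ne_bot
      rw [eq_iff_iff]
      show ((↑a : EnergyVal) ≠ ⊥ ∧ (↑a : EnergyVal) ≤ g (f ↑a)) ↔ (f ↑a ≠ ⊥ ∧ f ↑a ≤ f (g (f ↑a)))
      constructor
      · rintro ⟨-, hle⟩
        have hgf : g (f ↑a) ≠ ⊥ := fun h => hane (le_bot_iff.1 (h ▸ hle))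
        have hfb : f ↑a ≠ ⊥ := fun h => hgf (by rw [h, hg.1])
        refine ⟨hfb, ?_⟩
        obtain ⟨c, hc⟩ := WithBot.ne_bot_iff_exists.1 hgf
        rw [← hc] at hle ⊢
        exact ef_mono hf (WithBot.coe_le_coe.1 hle)
      · rintro ⟨hfb, hle⟩
        refine ⟨hane, ?_⟩
        by_contra hx
        have hlt : g (f ↑a) < ↑a := not_le.1 hx
        rcases hgb : g (f ↑a) with _ | c
        · rw [WithBot.none_eq_bot] at hgb
          rw [hgb, hf.1, le_bot_iff] at hle
          exact hfb hle
        · rw [WithBot.some_eq_coe] at hgb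
          rw [hgb] at hlt hle
          have hca : c < a := WithBot.coe_lt_coe.1 hlt
          have key := hf.2.1 c a hca.le
          have hfc_ne : f ↑c ≠ ⊥ := fun h => hfb (le_bot_iff.1 (h ▸ hle))
          obtain ⟨e, he⟩ := WithBot.ne_bot_iff_exists.1 hfc_ne
          have hcyc : f ↑c + ↑(a - c) ≤ f ↑c := key.trans hle
          rw [← he, ← WithBot.coe_add, WithBot.coe_le_coe] at hcyc
          have hetop : e = ⊤ := by
            by_contra hne
            exact absurd hcyc (not_le.2 (ENNReal.lt_add_right hne (tsub_pos_of_lt hca).ne'))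
          have hfa_top : f ↑a = ↑(⊤ : ℝ≥0∞) := by
            have : (↑(⊤ : ℝ≥0∞) : EnergyVal) ≤ f ↑a := by
              calc (↑(⊤ : ℝ≥0∞) : EnergyVal) = ↑(⊤ + (a - c)) := by simp
              _ = ↑(⊤ : ℝ≥0∞) + ↑(a - c) := by rw [WithBot.coe_add]
              _ = f ↑c + ↑(a - c) := by rw [← he, hetop]
              _ ≤ f ↑a := key
            exact le_antisymm le_top this
          rcases hg.2.2 with hgbot | hgtop
          · exact WithBot.coe_ne_bot (hgb ▸ hgbot (f ↑a))
          · rw [hfa_top, hgtop] at hgb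
            exact absurd (hgb ▸ hlt) (not_lt.2 le_top)
end

section
/- For all extended energy functions f, g ∈ E, (f ∨ g)^ω = sup over all infinite sequences h₀, h₁, … with each h_i ∈ {f, g} of the infinite product Π_{i=0}^∞ h_i. -/
open scoped ENNReal NNReal

/-- The orbit `x₀, x₁, x₂, …` with `x_{n+1} = F n x_n`. -/
def prodSeq (F : ℕ → EnergyVal → EnergyVal) (x : EnergyVal) : ℕ → EnergyVal
  | 0 => x
  | n + 1 => F n (prodSeq F x n)

/-- The infinite product `Π_{i=0}^∞ F i ∈ V`: `(Π F i) x₀` holds iff `x_n ≠ ⊥`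
for all `n`, where `x_{n+1} = F n x_n`. -/
def iProd (F : ℕ → EnergyVal → EnergyVal) : EnergyVal → Prop :=
  fun x => ∀ n, prodSeq F x n ≠ ⊥

-- monotone on non-bot
lemma energy_mono_s14 {f : EnergyVal → EnergyVal} (hf : IsEnergyFunction f)
    {a b : EnergyVal} (ha : a ≠ ⊥) (hab : a ≤ b) : f a ≤ f b := by
  have hb : b ≠ ⊥ := fun h => ha (le_bot_iff.mp (h ▸ hab))
  lift a to ℝ≥0∞ using ha
  lift b to ℝ≥0∞ using hb
  have hab' : a ≤ b := WithBot.coe_le_coe.mp hab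
  calc f ↑a ≤ f ↑a + ↑(b - a) := le_add_of_nonneg_right (by exact_mod_cast zero_le)
    _ ≤ f ↑b := hf.2.1 a b hab'

lemma energy_key {f : EnergyVal → EnergyVal} (hf : IsEnergyFunction f)
    {x₀ m₀ y z : ℝ≥0∞} (hy : y ≤ x₀) (hfx : f ↑x₀ ≤ ↑m₀) (hz : f ↑y = ↑z) :
    z + (x₀ - y) ≤ m₀ := by
  have h := hf.2.1 y x₀ hy
  rw [hz] at h
  have : ((z + (x₀ - y) : ℝ≥0∞) : EnergyVal) ≤ ↑m₀ := by
    push_cast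
    exact le_trans h hfx
  exact_mod_cast this

/-- For all extended energy functions `f, g`: `(f ∨ g)^ω` is the supremum, over all
infinite sequences `h₀, h₁, …` with each `h_i ∈ {f, g}`, of the infinite product
`Π_{i=0}^∞ h_i` (suprema in `V` being pointwise, i.e. existential). -/
theorem stmt14 (f g : EnergyVal → EnergyVal)
    (hf : IsEnergyFunction f) (hg : IsEnergyFunction g) :
    omegaFn (fun x => f x ⊔ g x) =
      fun x => ∃ h : ℕ → EnergyVal → EnergyVal, (∀ i, h i = f ∨ h i = g) ∧ iProd h x := by
  funext x
  apply propext
  constructor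
  · rintro ⟨hxb, hxle⟩
    -- define orbit X
    set X : ℕ → EnergyVal := fun n => Nat.rec x (fun _ y => f y ⊔ g y) n with hX
    have hX0 : X 0 = x := rfl
    have hXs : ∀ n, X (n+1) = f (X n) ⊔ g (X n) := fun n => rfl
    classical
    refine ⟨fun n => if g (X n) ≤ f (X n) then f else g, fun i => by by_cases h' : g (X i) ≤ f (X i) <;> simp [h'], ?_⟩
    -- invariant
    have inv : ∀ n, X n ≠ ⊥ ∧ X n ≤ X (n+1) := by
      intro n
      induction n with
      | zero => exact ⟨hxb, hxle⟩
      | succ n ih =>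
        have hb : X (n+1) ≠ ⊥ := fun h => ih.1 (le_bot_iff.mp (h ▸ ih.2))
        refine ⟨hb, ?_⟩
        rw [hXs n, hXs (n+1)]
        exact sup_le_sup (energy_mono_s14 hf ih.1 ih.2) (energy_mono_s14 hg ih.1 ih.2)
    have hps : ∀ n, prodSeq (fun n => if g (X n) ≤ f (X n) then f else g) x n = X n := by
      intro n
      induction n with
      | zero => rfl
      | succ n ih =>
        show (if g (X n) ≤ f (X n) then f else g) (prodSeq _ x n) = X (n+1)
        rw [ih, hXs n]
        split_ifs with h
        · exact (sup_eq_left.mpr h).symm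
        · exact (sup_eq_right.mpr (le_of_not_ge h)).symm
    intro n
    rw [hps n]
    exact (inv n).1
  · rintro ⟨h, hfg, hip⟩
    have hxb : x ≠ ⊥ := hip 0
    refine ⟨hxb, ?_⟩
    by_contra hlt
    push_neg at hlt  -- hlt : f x ⊔ g x < x
    lift x to ℝ≥0∞ using hxb with x₀
    -- case x₀ = ⊤
    rcases eq_or_ne x₀ ⊤ with htop | htop
    · subst htop
      have hflt : f ↑(⊤:ℝ≥0∞) < ↑(⊤:ℝ≥0∞) := lt_of_le_of_lt le_sup_left hlt
      have hglt : g ↑(⊤:ℝ≥0∞) < ↑(⊤:ℝ≥0∞) := lt_of_le_of_lt le_sup_right hlt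
      have hfb : ∀ y, f y = ⊥ := by
        rcases hf.2.2 with h' | h'
        · exact h'
        · exact absurd h' hflt.ne
      have hgb : ∀ y, g y = ⊥ := by
        rcases hg.2.2 with h' | h'
        · exact h'
        · exact absurd h' hglt.ne
      have : prodSeq h (↑(⊤:ℝ≥0∞)) 1 = ⊥ := by
        show h 0 (↑(⊤:ℝ≥0∞)) = ⊥
        rcases hfg 0 with h0 | h0 <;> rw [h0] <;> simp [hfb, hgb]
      exact hip 1 this
    -- m := f x ⊔ g x
    rcases eq_or_ne (f ↑x₀ ⊔ g ↑x₀) ⊥ with hm | hm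
    · have : prodSeq h ↑x₀ 1 = ⊥ := by
        show h 0 ↑x₀ = ⊥
        rcases hfg 0 with h0 | h0 <;> rw [h0]
        · exact le_bot_iff.mp (hm ▸ le_sup_left)
        · exact le_bot_iff.mp (hm ▸ le_sup_right)
      exact hip 1 this
    lift (f ↑x₀ ⊔ g ↑x₀) to ℝ≥0∞ using hm with m₀ hm₀
    have hm₀lt : m₀ < x₀ := WithBot.coe_lt_coe.mp (hm₀ ▸ hlt)
    set δ : ℝ≥0∞ := x₀ - m₀ with hδ
    have hδpos : δ ≠ 0 := by
      simp only [hδ]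
      exact (tsub_pos_of_lt hm₀lt).ne'
    have hmx : m₀ + δ = x₀ := by
      rw [hδ, add_tsub_cancel_of_le hm₀lt.le]
    -- invariant
    have inv : ∀ n, ∃ y : ℝ≥0∞, prodSeq h ↑x₀ n = ↑y ∧ y + n * δ ≤ x₀ := by
      intro n
      induction n with
      | zero => exact ⟨x₀, rfl, by simp⟩
      | succ n ih =>
        obtain ⟨y, hy, hyle⟩ := ih
        have hyx : y ≤ x₀ := le_trans (le_add_right le_rfl) hyle
        have hnb := hip (n+1)
        rw [show prodSeq h ↑x₀ (n+1) = h n (prodSeq h ↑x₀ n) from rfl, hy] at hnb ⊢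
        lift (h n ↑y) to ℝ≥0∞ using hnb with z hz
        refine ⟨z, rfl, ?_⟩
        have hkey : z + (x₀ - y) ≤ m₀ := by
          rcases hfg n with h' | h'
          · exact energy_key hf hyx (hm₀ ▸ le_sup_left) (h' ▸ hz.symm)
          · exact energy_key hg hyx (hm₀ ▸ le_sup_right) (h' ▸ hz.symm)
        have hnδ : (n : ℝ≥0∞) * δ ≤ x₀ - y := ENNReal.le_sub_of_add_le_left (hyx.trans_lt (lt_top_iff_ne_top.mpr htop)).ne hyle
        calc z + (↑(n+1)) * δ = z + δ + ↑n * δ := by push_cast; ring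
          _ ≤ z + δ + (x₀ - y) := add_le_add_right hnδ _
          _ = z + (x₀ - y) + δ := by ring
          _ ≤ m₀ + δ := add_le_add_left hkey δ
          _ = x₀ := hmx
    -- contradiction
    have hδtop : δ ≠ ⊤ := by
      rw [hδ]
      exact (lt_of_le_of_lt tsub_le_self (lt_top_iff_ne_top.mpr htop)).ne
    obtain ⟨n, hn⟩ := ENNReal.exists_nat_gt (show x₀ / δ ≠ ⊤ from (ENNReal.div_lt_top htop hδpos).ne)
    have hx₀lt : x₀ < n * δ := by
      rw [← ENNReal.div_lt_iff (Or.inl hδpos) (Or.inl hδtop)]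
      exact hn
    obtain ⟨y, _, hyle⟩ := inv n
    exact absurd (le_trans (le_add_left le_rfl) hyle) (not_le.mpr hx₀lt)
end

section
/- Let (S, T) be an energy automaton with finitely many transitions, and define T' = {(s, sup{f | (s,f,s') ∈ T}, s') | s, s' ∈ S}, where sup ∅ is the constant-⊥ function, so that T' has exactly one transition between each ordered pair of states. Then for every initial state s₀ ∈ S, every set of accepting states F ⊆ S, and every x₀ ∈ [0,∞): (S,T) admits a finite run from (s₀,x₀) ending in a state of F if and only if (S,T') does; and (S,T) admits an infinite run from (s₀,x₀) visiting F infinitely often if and only if (S,T') does. -/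
open scoped ENNReal NNReal

/-- The pointwise supremum `sup { f | (s, f, s') ∈ T }` of the labels of all
transitions from `s` to `s'` (the constant-`⊥` function if there are none). -/
noncomputable def supLabel {S : Type} (T : Set (S × (EnergyVal → EnergyVal) × S))
    (s s' : S) : EnergyVal → EnergyVal :=
  fun x => sSup {y | ∃ f, (s, f, s') ∈ T ∧ y = f x}

/-- There is a finite run of the energy automaton `(S, T)` from `(s₀, x₀)` ending in
a state of `F`. -/
def FinAccept {S : Type} (T : Set (S × (EnergyVal → EnergyVal) × S))
    (s₀ : S) (F : Set S) (x₀ : EnergyVal) : Prop :=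
  ∃ (m : ℕ) (σ : ℕ → S) (ξ : ℕ → EnergyVal),
    σ 0 = s₀ ∧ ξ 0 = x₀ ∧
    (∀ t, t < m → ∃ f, (σ t, f, σ (t + 1)) ∈ T ∧ ξ (t + 1) = f (ξ t)) ∧
    (∀ t, t ≤ m → ξ t ≠ ⊥) ∧ σ m ∈ F

/-- There is an infinite run of the energy automaton `(S, T)` from `(s₀, x₀)`
visiting `F` infinitely often. -/
def BuchiAccept {S : Type} (T : Set (S × (EnergyVal → EnergyVal) × S))
    (s₀ : S) (F : Set S) (x₀ : EnergyVal) : Prop :=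
  ∃ (σ : ℕ → S) (ξ : ℕ → EnergyVal),
    σ 0 = s₀ ∧ ξ 0 = x₀ ∧
    (∀ t, ∃ f, (σ t, f, σ (t + 1)) ∈ T ∧ ξ (t + 1) = f (ξ t)) ∧
    (∀ t, ξ t ≠ ⊥) ∧ (∀ N, ∃ t, N ≤ t ∧ σ t ∈ F)

lemma supLabel_mono {S : Type} {T : Set (S × (EnergyVal → EnergyVal) × S)}
    (hTE : ∀ p ∈ T, IsEnergyFunction p.2.1) (s s' : S) : Monotone (supLabel T s s') := by
  intro x y hxy
  apply sSup_le
  rintro z ⟨f, hfT, rfl⟩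
  exact le_trans (energy_mono (hTE _ hfT) hxy) (le_sSup ⟨f, hfT, rfl⟩)

lemma le_supLabel {S : Type} {T : Set (S × (EnergyVal → EnergyVal) × S)}
    {s s' : S} {f : EnergyVal → EnergyVal} (hfT : (s, f, s') ∈ T) (x : EnergyVal) :
    f x ≤ supLabel T s s' x :=
  le_sSup ⟨f, hfT, rfl⟩

lemma supLabel_attained {S : Type} {T : Set (S × (EnergyVal → EnergyVal) × S)}
    (hTfin : T.Finite) (s s' : S) (x : EnergyVal) (h : supLabel T s s' x ≠ ⊥) :
    ∃ f, (s, f, s') ∈ T ∧ supLabel T s s' x = f x := by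
  set A : Set EnergyVal := {y | ∃ f, (s, f, s') ∈ T ∧ y = f x} with hA
  have hAfin : A.Finite := by
    apply (hTfin.image (fun p => p.2.1 x)).subset
    rintro z ⟨f, hfT, rfl⟩
    exact ⟨(s, f, s'), hfT, rfl⟩
  have hne : A.Nonempty := by
    by_contra hempty
    rw [Set.not_nonempty_iff_eq_empty] at hempty
    apply h
    show sSup A = ⊥
    rw [hempty, sSup_empty]
  have hmem := @Set.Nonempty.csSup_mem (WithBot (WithTop ℝ≥0)) _ A hne hAfin
  exact hmem

lemma ne_bot_of_le {a b : EnergyVal} (hab : a ≤ b) (ha : a ≠ ⊥) : b ≠ ⊥ := by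
  intro hb
  exact ha (le_bot_iff.mp (hb ▸ hab))

/-- Replacing all transitions of an energy automaton `(S, T)` between each ordered
pair of states by a single transition labeled with the pointwise supremum of their
labels (`sup ∅ = ⊥̄`) changes neither reachability nor Büchi acceptance. -/
theorem stmt16 {S : Type} [Fintype S]
    (T : Set (S × (EnergyVal → EnergyVal) × S)) (hTfin : T.Finite)
    (hTE : ∀ p ∈ T, IsEnergyFunction p.2.1)
    (s₀ : S) (F : Set S) (x₀ : ℝ≥0∞) (hx₀ : x₀ ≠ ⊤) :
    (FinAccept T s₀ F ↑x₀ ↔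
      FinAccept {p | p.2.1 = supLabel T p.1 p.2.2} s₀ F ↑x₀) ∧
    (BuchiAccept T s₀ F ↑x₀ ↔
      BuchiAccept {p | p.2.1 = supLabel T p.1 p.2.2} s₀ F ↑x₀) := by
  constructor
  · constructor
    · rintro ⟨m, σ, ξ, hσ0, hξ0, hstep, hbot, hF⟩
      -- define ξ' by iterating supLabel
      let ξ' : ℕ → EnergyVal := fun t => Nat.rec (↑x₀ : EnergyVal)
        (fun t y => supLabel T (σ t) (σ (t + 1)) y) t
      have hle : ∀ t, t ≤ m → ξ t ≤ ξ' t := by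
        intro t
        induction t with
        | zero => intro _; rw [hξ0]; exact le_rfl
        | succ n ih =>
          intro hn
          obtain ⟨f, hfT, hfx⟩ := hstep n (lt_of_lt_of_le (Nat.lt_succ_self n) hn)
          calc ξ (n + 1) = f (ξ n) := hfx
            _ ≤ f (ξ' n) := energy_mono (hTE _ hfT) (ih (le_of_lt (lt_of_lt_of_le (Nat.lt_succ_self n) hn)))
            _ ≤ supLabel T (σ n) (σ (n + 1)) (ξ' n) := le_supLabel hfT _
      refine ⟨m, σ, ξ', hσ0, rfl, ?_, ?_, hF⟩
      · intro t _
        exact ⟨supLabel T (σ t) (σ (t + 1)), rfl, rfl⟩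
      · intro t ht
        exact ne_bot_of_le (hle t ht) (hbot t ht)
    · rintro ⟨m, σ, ξ, hσ0, hξ0, hstep, hbot, hF⟩
      refine ⟨m, σ, ξ, hσ0, hξ0, ?_, hbot, hF⟩
      intro t ht
      obtain ⟨f, hfT, hfx⟩ := hstep t ht
      have hf : f = supLabel T (σ t) (σ (t + 1)) := hfT
      rw [hf] at hfx
      obtain ⟨g, hgT, hgx⟩ := supLabel_attained hTfin (σ t) (σ (t + 1)) (ξ t)
        (by rw [← hfx]; exact hbot (t + 1) ht)
      exact ⟨g, hgT, by rw [hfx, hgx]⟩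
  · constructor
    · rintro ⟨σ, ξ, hσ0, hξ0, hstep, hbot, hF⟩
      let ξ' : ℕ → EnergyVal := fun t => Nat.rec (↑x₀ : EnergyVal)
        (fun t y => supLabel T (σ t) (σ (t + 1)) y) t
      have hle : ∀ t, ξ t ≤ ξ' t := by
        intro t
        induction t with
        | zero => rw [hξ0]; exact le_rfl
        | succ n ih =>
          obtain ⟨f, hfT, hfx⟩ := hstep n
          calc ξ (n + 1) = f (ξ n) := hfx
            _ ≤ f (ξ' n) := energy_mono (hTE _ hfT) ih
            _ ≤ supLabel T (σ n) (σ (n + 1)) (ξ' n) := le_supLabel hfT _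
      refine ⟨σ, ξ', hσ0, rfl, ?_, ?_, hF⟩
      · intro t
        exact ⟨supLabel T (σ t) (σ (t + 1)), rfl, rfl⟩
      · intro t
        exact ne_bot_of_le (hle t) (hbot t)
    · rintro ⟨σ, ξ, hσ0, hξ0, hstep, hbot, hF⟩
      refine ⟨σ, ξ, hσ0, hξ0, ?_, hbot, hF⟩
      intro t
      obtain ⟨f, hfT, hfx⟩ := hstep t
      have hf : f = supLabel T (σ t) (σ (t + 1)) := hfT
      rw [hf] at hfx
      obtain ⟨g, hgT, hgx⟩ := supLabel_attained hTfin (σ t) (σ (t + 1)) (ξ t)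
        (by rw [← hfx]; exact hbot (t + 1))
      exact ⟨g, hgT, by rw [hfx, hgx]⟩
end

section
/- For any extended energy function f ∈ E and any real x ∈ [0,∞) with f(x) < x, the iterates of f at x eventually reach ⊥: there exists N ∈ ℕ such that fⁿ(x) = ⊥ for all n ≥ N (equivalently, lim_{n→∞} fⁿ(x) = ⊥). -/
open scoped ENNReal NNReal

/-- For any extended energy function `f` and any real `x ∈ [0,∞)` with `f x < x`,
the iterates of `f` at `x` eventually reach `⊥`: there is `N ∈ ℕ` with `fⁿ x = ⊥`
for all `n ≥ N`. -/
theorem stmt19 (f : EnergyVal → EnergyVal) (hf : IsEnergyFunction f)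
    (x : ℝ≥0∞) (hx : x ≠ ⊤) (hlt : f ↑x < ↑x) :
    ∃ N : ℕ, ∀ n : ℕ, N ≤ n → f^[n] ↑x = ⊥ := by
  -- Once we reach ⊥ we stay there.
  have hbot : ∀ m : ℕ, f^[m] (⊥ : EnergyVal) = ⊥ := fun m => Function.iterate_fixed hf.1 m
  have key : ∃ N : ℕ, f^[N] (↑x : EnergyVal) = ⊥ := by
    rcases hy : f ↑x with _ | y
    · exact ⟨1, by simp only [Function.iterate_one]; exact hy⟩
    · rw [hy] at hlt
      have hyx : y < x := WithBot.coe_lt_coe.1 hlt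
      set δ : ℝ≥0∞ := x - y with hδ
      have hδpos : 0 < δ := tsub_pos_of_lt hyx
      have hytop : y ≠ ⊤ := fun h => hx (top_le_iff.1 (h ▸ hyx.le))
      -- step lemma
      have hstep : ∀ a b : ℝ≥0∞, a ≤ x → f ↑a = ↑b → b + δ ≤ a := by
        intro a b hax hab
        have h1 := hf.2.1 a x hax
        rw [hab, hy] at h1
        have h2 : b + (x - a) ≤ y := by
          rw [← WithBot.coe_add] at h1; exact WithBot.coe_le_coe.1 h1
        have h3 : b + (x - a) + a ≤ y + a := add_le_add_left h2 a
        rw [add_assoc, tsub_add_cancel_of_le hax] at h3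
        have h4 : b + (y + δ) ≤ y + a := by
          rwa [hδ, add_tsub_cancel_of_le hyx.le]
        have h5 : y + (b + δ) ≤ y + a := by
          calc y + (b + δ) = b + (y + δ) := by ring
          _ ≤ y + a := h4
        exact (ENNReal.add_le_add_iff_left hytop).1 h5
      have claim : ∀ n : ℕ, f^[n] (↑x : EnergyVal) = ⊥ ∨
          ∃ z : ℝ≥0∞, f^[n] (↑x : EnergyVal) = ↑z ∧ z + n * δ ≤ x := by
        intro n
        induction n with
        | zero => exact Or.inr ⟨x, rfl, by simp⟩
        | succ n ih =>
          rcases ih with h | ⟨z, hz, hzx⟩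
          · left; rw [Function.iterate_succ_apply', h, hf.1]
          · have hzx' : z ≤ x := le_trans (le_add_right le_rfl) hzx
            rcases hw : f ↑z with _ | w
            · left; rw [Function.iterate_succ_apply', hz, hw]; rfl
            · right
              refine ⟨w, by rw [Function.iterate_succ_apply', hz, hw]; rfl, ?_⟩
              have := hstep z w hzx' hw
              calc w + (↑(n+1)) * δ = (w + δ) + n * δ := by push_cast; ring
              _ ≤ z + n * δ := add_le_add_left this _
              _ ≤ x := hzx
      obtain ⟨N, hN⟩ := ENNReal.exists_nat_mul_gt hδpos.ne' hx
      refine ⟨N, ?_⟩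
      rcases claim N with h | ⟨z, hz, hzx⟩
      · exact h
      · exact absurd (le_trans (le_add_left le_rfl) hzx) (not_le.2 hN)
  obtain ⟨N, hN⟩ := key
  refine ⟨N, fun n hn => ?_⟩
  have : n = (n - N) + N := (Nat.sub_add_cancel hn).symm
  rw [this, Function.iterate_add_apply, hN, hbot]
end
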